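/- In the space (S^α)_1 (for α an infinite cardinal), if t ∈ {0,1}^α is a point with only finitely many coordinates equal to 0, and t lies in the closure of a set U with t ∉ U, then there exists an injective ordinary sequence of points of U converging to t. -/

import Mathlib

open Filter Topology

universe u

/-- The two points of the Sierpiński space. -/
inductive SPt : Type
  | zero
  | one
deriving DecidableEq

/-- The Sierpiński topology: `{zero}` is open, `{one}` is not. -/
instance : TopologicalSpace SPt := TopologicalSpace.generateFrom {{SPt.zero}}

/-- `A` is closed under limits of `o`-indexed transfinite sequences for all infinite
ordinals `o ≤ β` (β an infinite cardinal, viewed as an ordinal). -/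
def OrdSeqClosed {X : Type u} [TopologicalSpace X] (β : Cardinal.{u}) (A : Set X) : Prop :=
  ∀ o : Ordinal.{u}, Ordinal.omega0 ≤ o → o ≤ β.ord →
    ∀ f : o.ToType → X, (∀ i, f i ∈ A) →
    ∀ x : X, Filter.Tendsto f Filter.atTop (nhds x) → x ∈ A

/-- A space is β-sequential if every such subset is closed. -/
def IsBetaSequential (X : Type u) [TopologicalSpace X] (β : Cardinal.{u}) : Prop :=
  ∀ A : Set X, OrdSeqClosed β A → IsClosed A

/-- `A` contains limits of all convergent transfinite sequences of its points. -/
def TransSeqClosed {X : Type u} [TopologicalSpace X] (A : Set X) : Prop :=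
  ∀ o : Ordinal.{u}, Ordinal.omega0 ≤ o →
    ∀ f : o.ToType → X, (∀ i, f i ∈ A) →
    ∀ x : X, Filter.Tendsto f Filter.atTop (nhds x) → x ∈ A

/-- Pseudoradial space. -/
def IsPseudoradial (X : Type u) [TopologicalSpace X] : Prop :=
  ∀ A : Set X, TransSeqClosed A → IsClosed A

/-- The cofinite topology on a type. -/
def cofiniteTopology (Y : Type u) : TopologicalSpace Y :=
  TopologicalSpace.cofinite (X := Y)

lemma spt_open_one {s : Set SPt} (hs : IsOpen s) (h1 : SPt.one ∈ s) : ∀ x, x ∈ s := by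
  induction hs with
  | basic u hu =>
    rw [Set.mem_singleton_iff] at hu
    subst hu
    exact absurd h1 (by simp)
  | univ => simp
  | inter u v _ _ ihu ihv => exact fun x => ⟨ihu h1.1 x, ihv h1.2 x⟩
  | sUnion S _ ih =>
    obtain ⟨u, huS, hu⟩ := h1
    exact fun x => ⟨u, huS, ih u huS hu x⟩

lemma spt_tendsto_one {ι : Type*} {l : Filter ι} (g : ι → SPt) :
    Tendsto g l (nhds SPt.one) := by
  rw [Filter.tendsto_def]
  intro s hs
  obtain ⟨o, hos, hoo, ho1⟩ := mem_nhds_iff.mp hs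
  exact Filter.univ_mem' (fun i => hos (spt_open_one hoo ho1 (g i)))

lemma spt_isOpen_zero : IsOpen ({SPt.zero} : Set SPt) :=
  TopologicalSpace.isOpen_generateFrom_of_mem rfl


/-- In `(S^α)_1`, if `t` has only finitely many coordinates equal to `0` and
`t ∈ closure U \ U`, then some injective ordinary sequence of points of `U` converges
to `t`. -/
theorem exists_injective_seq_tendsto (α : Cardinal.{u}) (hα : Cardinal.aleph0 ≤ α)
    (t : α.ord.ToType → SPt) (ht : {i | t i = SPt.zero}.Finite)
    (U : Set (α.ord.ToType → SPt))
    (htU : t ∈ @closure _ (Pi.topologicalSpace ⊓ cofiniteTopology (α.ord.ToType → SPt)) U)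
    (htnU : t ∉ U) :
    ∃ f : ℕ → (α.ord.ToType → SPt), Function.Injective f ∧ (∀ n, f n ∈ U) ∧
      Filter.Tendsto f Filter.atTop
        (@nhds _ (Pi.topologicalSpace ⊓ cofiniteTopology (α.ord.ToType → SPt)) t) := by
  let X := α.ord.ToType → SPt
  let τ : TopologicalSpace X := Pi.topologicalSpace ⊓ cofiniteTopology X
  let V : Set X := {i | t i = SPt.zero}.pi (fun _ => {SPt.zero})
  have htV : t ∈ V := fun i hi => hi
  have hVopen : IsOpen[Pi.topologicalSpace] V :=
    isOpen_set_pi ht (fun i _ => spt_isOpen_zero)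
  -- V ∩ U is infinite
  have hinf : (V ∩ U).Infinite := by
    intro hfin
    have hopenO : IsOpen[τ] (V \ (V ∩ U)) := by
      apply IsOpen.inter
      · exact hVopen.mono inf_le_left
      · refine (?_ : IsOpen[cofiniteTopology X] (V ∩ U)ᶜ).mono inf_le_right
        exact fun _ => by simpa using hfin
    have htO : t ∈ V \ (V ∩ U) := ⟨htV, fun h => htnU h.2⟩
    obtain ⟨g, hgO, hgU⟩ :=
      (@mem_closure_iff X τ t U).mp htU _ hopenO htO
    exact hgO.2 ⟨hgO.1, hgU⟩
  let f : ℕ → X := fun n => (hinf.natEmbedding _ n : X)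
  have hfmem : ∀ n, f n ∈ V ∩ U := fun n => (hinf.natEmbedding _ n).2
  have hfinj : Function.Injective f := fun a b h =>
    (hinf.natEmbedding _).injective (Subtype.ext h)
  refine ⟨f, hfinj, fun n => (hfmem n).2, ?_⟩
  rw [show (@nhds _ (Pi.topologicalSpace ⊓ cofiniteTopology X) t) =
      @nhds _ Pi.topologicalSpace t ⊓ @nhds _ (cofiniteTopology X) t from
      @nhds_inf _ Pi.topologicalSpace (cofiniteTopology X) t, tendsto_inf]
  constructor
  · rw [tendsto_pi_nhds]
    intro i
    cases hti : t i with
    | one => exact spt_tendsto_one _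
    | zero =>
      have : (fun n => f n i) = fun _ => SPt.zero :=
        funext fun n => (hfmem n).1 i hti
      rw [this]
      exact tendsto_const_nhds
  · have hn : @nhds X (cofiniteTopology X) t = pure t ⊔ cofinite := by
      ext s
      rw [@mem_nhds_iff X (cofiniteTopology X) t s]
      constructor
      · rintro ⟨V, hVU, V_op, haV⟩
        exact mem_sup.mpr ⟨hVU haV, mem_of_superset (V_op ⟨_, haV⟩) hVU⟩
      · rintro ⟨hU, hU'⟩
        exact ⟨s, subset_rfl, fun _ => hU', hU⟩
    rw [hn]
    refine Tendsto.mono_right ?_ le_sup_right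
    rw [← Nat.cofinite_eq_atTop]
    exact hfinj.tendsto_cofinite
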